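/- Assume T = Σ_j p_j is a power of 2. For every feasible solution y to (IP2) there exists a feasible solution x to (IP1) whose cost is at most 4 times the cost of y. -/

import Mathlib

/-- The procedure `FormSegments`, starting at stage `s` with current time `t`, stopping
once `t ≥ T`.  Each produced entry `(s, a, b)` records the stage `s` at which the
interval `[a, b]` was appended. -/
def segAux (T : ℕ) (s t : ℕ) : List (ℕ × ℕ × ℕ) :=
  if h : t < T then
    if 2 ^ (s + 1) ∣ t then
      (s, t, t + 2 ^ s) :: (s, t + 2 ^ s, t + 2 ^ (s + 1)) ::
        segAux T (s + 1) (t + 2 ^ (s + 1))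
    else
      (s, t, t + 2 ^ s) :: segAux T (s + 1) (t + 2 ^ s)
  else []
termination_by T - t
decreasing_by
  · have h1 : 0 < 2 ^ (s + 1) := Nat.pow_pos (by norm_num)
    omega
  · have h1 : 0 < 2 ^ s := Nat.pow_pos (by norm_num)
    omega

/-- `Seg T r` : the sequence of intervals of `Seg(r)` (forgetting the stages). -/
def Seg (T rj : ℕ) : List (ℕ × ℕ) := (segAux T 0 rj).map fun x => (x.2.1, x.2.2)

/-- `segOf T rj t` : the (unique) segment of `Seg(rj)` containing slot `t`. -/
def segOf (T rj t : ℕ) : ℕ × ℕ :=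
  ((Seg T rj).find? fun S => decide (S.1 ≤ t ∧ t + 1 ≤ S.2)).getD (0, 0)

/-- (IP1) feasibility for the weighted flow-time integer program. -/
def IP1Feasible {J : Type} [Fintype J] (p r : J → ℕ) (T : ℕ) (x : J → ℕ → ℕ) : Prop :=
  (∀ j t, r j ≤ t → t ≤ T → x j t ≤ 1) ∧
  (∀ j t, r j < t → t ≤ T → x j t ≤ x j (t - 1)) ∧
  (∀ s t : ℕ, s ≤ t → t ≤ T →
    (∑ j ∈ Finset.univ.filter fun j => s ≤ r j ∧ r j ≤ t, (p j : ℤ)) - ((t : ℤ) - (s : ℤ))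
      ≤ ∑ j ∈ Finset.univ.filter fun j => s ≤ r j ∧ r j ≤ t, (p j : ℤ) * (x j t : ℤ))

/-- Cost of an (IP1) solution: `∑_j ∑_{t = r_j}^{T} w_j · x_{j,t}`. -/
def IP1Cost {J : Type} [Fintype J] (w : J → ℚ) (r : J → ℕ) (T : ℕ) (x : J → ℕ → ℕ) : ℚ :=
  ∑ j, ∑ t ∈ Finset.Icc (r j) T, w j * (x j t : ℚ)

/-- (IP2) feasibility: `y j S ∈ {0,1}` for each job segment `(j, S)` with `S ∈ Seg(r j)`,
and for every interval `I = [s,t]` with `0 ≤ s ≤ t < T`,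
`∑_{j ∈ J(I)} p j · y (j, S_j(t)) ≥ p(J(I)) − (t − s)`, where `S_j(t)` is the segment
of `Seg(r j)` containing slot `t`. -/
def IP2Feasible {J : Type} [Fintype J] (p r : J → ℕ) (T : ℕ) (y : J → ℕ × ℕ → ℕ) : Prop :=
  (∀ j S, S ∈ Seg T (r j) → y j S ≤ 1) ∧
  (∀ s t : ℕ, s ≤ t → t < T →
    (∑ j ∈ Finset.univ.filter fun j => s ≤ r j ∧ r j ≤ t, (p j : ℤ)) - ((t : ℤ) - (s : ℤ))
      ≤ ∑ j ∈ Finset.univ.filter fun j => s ≤ r j ∧ r j ≤ t,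
          (p j : ℤ) * (y j (segOf T (r j) t) : ℤ))

/-- Cost of an (IP2) solution: `∑_j ∑_{S ∈ Seg(j)} w_j · l(S) · y (j, S)`. -/
def IP2Cost {J : Type} [Fintype J] (w : J → ℚ) (r : J → ℕ) (T : ℕ)
    (y : J → ℕ × ℕ → ℕ) : ℚ :=
  ∑ j, ((Seg T (r j)).map fun S => w j * ((S.2 - S.1 : ℕ) : ℚ) * (y j S : ℚ)).sum


theorem seg_structure (T : ℕ) : ∀ s t0, ∀ e ∈ segAux T s t0, e.2.2 = e.2.1 + 2 ^ e.1 := by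
  intro s t0
  induction s, t0 using segAux.induct T with
  | case1 s t0 hlt hdvd ih =>
    intro e he
    rw [segAux, dif_pos hlt, if_pos hdvd, List.mem_cons, List.mem_cons] at he
    rcases he with rfl | rfl | he
    · simp
    · simp [pow_succ]; ring
    · exact ih e he
  | case2 s t0 hlt hdvd ih =>
    intro e he
    rw [segAux, dif_pos hlt, if_neg hdvd, List.mem_cons] at he
    rcases he with rfl | he
    · simp
    · exact ih e he
  | case3 s t0 h =>
    intro e he
    rw [segAux, dif_neg h] at he
    simp at he

theorem seg_bound (T : ℕ) (rr : ℕ) : ∀ s t0, t0 + 2 ≤ rr + 2 ^ (s + 1) →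
    ∀ e ∈ segAux T s t0, e.2.2 + 2 ≤ rr + 2 ^ (e.1 + 2) := by
  intro s t0
  induction s, t0 using segAux.induct T with
  | case1 s t0 hlt hdvd ih =>
    intro hb e he
    rw [segAux, dif_pos hlt, if_pos hdvd, List.mem_cons, List.mem_cons] at he
    have h1 : (0:ℕ) < 2 ^ s := Nat.pow_pos (by norm_num)
    have h2 : (2:ℕ) ^ (s+1) = 2 * 2 ^ s := by rw [pow_succ]; ring
    have h3 : (2:ℕ) ^ (s+2) = 4 * 2 ^ s := by rw [pow_succ, pow_succ]; ring
    rcases he with rfl | rfl | he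
    · simp only []; omega
    · simp only []; omega
    · exact ih (by omega) e he
  | case2 s t0 hlt hdvd ih =>
    intro hb e he
    rw [segAux, dif_pos hlt, if_neg hdvd, List.mem_cons] at he
    have h1 : (0:ℕ) < 2 ^ s := Nat.pow_pos (by norm_num)
    have h2 : (2:ℕ) ^ (s+1) = 2 * 2 ^ s := by rw [pow_succ]; ring
    have h3 : (2:ℕ) ^ (s+2) = 4 * 2 ^ s := by rw [pow_succ, pow_succ]; ring
    rcases he with rfl | he
    · simp only []; omega
    · exact ih (by omega) e he
  | case3 s t0 h =>
    intro _ e he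
    rw [segAux, dif_neg h] at he
    simp at he

theorem seg_cover (T : ℕ) : ∀ s t0, ∀ t, t0 ≤ t → t < T →
    ∃ e ∈ segAux T s t0, e.2.1 ≤ t ∧ t + 1 ≤ e.2.2 := by
  intro s t0
  induction s, t0 using segAux.induct T with
  | case1 s t0 hlt hdvd ih =>
    intro t ht0 htT
    rw [segAux, dif_pos hlt, if_pos hdvd]
    by_cases h1 : t < t0 + 2 ^ s
    · exact ⟨(s, t0, t0 + 2 ^ s), by simp, by dsimp only; omega, by dsimp only; omega⟩
    · by_cases h2 : t < t0 + 2 ^ (s + 1)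
      · exact ⟨(s, t0 + 2 ^ s, t0 + 2 ^ (s+1)), by simp, by dsimp only; omega,
          by dsimp only; omega⟩
      · obtain ⟨e, he, hc⟩ := ih t (by omega) htT
        exact ⟨e, by simp [he], hc⟩
  | case2 s t0 hlt hdvd ih =>
    intro t ht0 htT
    rw [segAux, dif_pos hlt, if_neg hdvd]
    by_cases h1 : t < t0 + 2 ^ s
    · exact ⟨(s, t0, t0 + 2 ^ s), by simp, by dsimp only; omega, by dsimp only; omega⟩
    · obtain ⟨e, he, hc⟩ := ih t (by omega) htT
      exact ⟨e, by simp [he], hc⟩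
  | case3 s t0 h =>
    intro t ht0 htT
    omega

/-- Every segment of `Seg T r` has length `2 ^ st` for some stage `st`, and its right
endpoint is at most `r + 2 ^ (st + 2) - 2`. -/
theorem Seg_mem_structure (T r : ℕ) {S : ℕ × ℕ} (hS : S ∈ Seg T r) :
    ∃ st, S.2 = S.1 + 2 ^ st ∧ S.2 + 2 ≤ r + 2 ^ (st + 2) := by
  obtain ⟨e, he, heq⟩ := List.mem_map.1 hS
  refine ⟨e.1, ?_, ?_⟩
  · have := seg_structure T 0 r e he
    rw [← heq]
    exact this
  · have := seg_bound T r 0 r (by norm_num) e he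
    rw [← heq]
    exact this

/-- For `r ≤ t < T`, `segOf T r t` is a genuine segment of `Seg T r` containing slot `t`. -/
theorem segOf_spec (T r t : ℕ) (hrt : r ≤ t) (htT : t < T) :
    segOf T r t ∈ Seg T r ∧ (segOf T r t).1 ≤ t ∧ t + 1 ≤ (segOf T r t).2 := by
  obtain ⟨e, he, h1, h2⟩ := seg_cover T 0 r t hrt htT
  have hmem : (e.2.1, e.2.2) ∈ Seg T r := List.mem_map_of_mem he
  have hsome : ((Seg T r).find? fun S => decide (S.1 ≤ t ∧ t + 1 ≤ S.2)).isSome := by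
    rw [List.find?_isSome]
    exact ⟨_, hmem, by simp only [decide_eq_true_eq]; exact ⟨h1, h2⟩⟩
  obtain ⟨S, hS⟩ := Option.isSome_iff_exists.mp hsome
  have hm := List.mem_of_find?_eq_some hS
  have hp := List.find?_some hS
  simp only [decide_eq_true_eq] at hp
  unfold segOf
  rw [hS]
  exact ⟨hm, hp⟩

/-- if `T = ∑_j p_j` is a power of two, then every feasible solution `y`
of (IP2) yields a feasible solution `x` of (IP1) of cost at most `4` times the cost
of `y`. -/
theorem stmt11 {J : Type} [Fintype J] (p r : J → ℕ) (w : J → ℚ)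
    (hp : ∀ j, 1 ≤ p j) (hw : ∀ j, 0 ≤ w j)
    (ℓ T : ℕ) (hT : T = ∑ j, p j) (hT2 : T = 2 ^ ℓ)
    (hrT : ∀ j, r j < T)
    (hbusy : ∀ t : ℕ, 1 ≤ t → t ≤ T →
      t ≤ ∑ j ∈ Finset.univ.filter fun j => r j < t, p j)
    (y : J → ℕ × ℕ → ℕ) (hy : IP2Feasible p r T y) :
    ∃ x : J → ℕ → ℕ, IP1Feasible p r T x ∧
      IP1Cost w r T x ≤ 4 * IP2Cost w r T y := by
  classical
  obtain ⟨hy1, hy2⟩ := hy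
  set x : J → ℕ → ℕ := fun j t =>
    if ∃ t', t ≤ t' ∧ t' < T ∧ 1 ≤ y j (segOf T (r j) t') then 1 else 0 with hxdef
  have hx01 : ∀ j t, x j t ≤ 1 := by
    intro j t
    simp only [hxdef]
    split <;> simp
  have hxone : ∀ j t, (∃ t', t ≤ t' ∧ t' < T ∧ 1 ≤ y j (segOf T (r j) t')) → x j t = 1 := by
    intro j t h
    simp only [hxdef]
    rw [if_pos h]
  have hxzero : ∀ j t, ¬ (∃ t', t ≤ t' ∧ t' < T ∧ 1 ≤ y j (segOf T (r j) t')) → x j t = 0 := by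
    intro j t h
    simp only [hxdef]
    rw [if_neg h]
  refine ⟨x, ⟨fun j t _ _ => hx01 j t, ?_, ?_⟩, ?_⟩
  · -- monotonicity
    intro j t hrt htT
    by_cases h : ∃ t', t ≤ t' ∧ t' < T ∧ 1 ≤ y j (segOf T (r j) t')
    · obtain ⟨t', h1, h2, h3⟩ := h
      have := hxone j (t - 1) ⟨t', by omega, h2, h3⟩
      rw [this]
      exact hx01 j t
    · rw [hxzero j t h]
      exact Nat.zero_le _
  · -- interval constraints
    intro s t hst htT
    rcases lt_or_eq_of_le htT with hlt | heq
    · refine le_trans (hy2 s t hst hlt) (Finset.sum_le_sum ?_)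
      intro j hj
      rw [Finset.mem_filter] at hj
      have hrle : r j ≤ t := hj.2.2
      rcases Nat.eq_zero_or_pos (y j (segOf T (r j) t)) with h0 | hpos
      · have h0' : ((y j (segOf T (r j) t) : ℤ)) = 0 := by exact_mod_cast h0
        rw [h0', mul_zero]
        positivity
      · have hs := segOf_spec T (r j) t hrle hlt
        have hy_le : y j (segOf T (r j) t) ≤ 1 := hy1 j _ hs.1
        have hx1 : x j t = 1 := hxone j t ⟨t, le_refl t, hlt, hpos⟩
        have : y j (segOf T (r j) t) ≤ x j t := by omega
        have hpz : (0:ℤ) ≤ (p j : ℤ) := by positivity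
        exact mul_le_mul_of_nonneg_left (by exact_mod_cast this) hpz
    · -- t = T
      have hsum0 : (∑ j ∈ Finset.univ.filter fun j => s ≤ r j ∧ r j ≤ t, p j) ≤ t - s := by
        rcases Nat.eq_zero_or_pos s with rfl | hs1
        · have h0 : (∑ j ∈ Finset.univ.filter fun j => 0 ≤ r j ∧ r j ≤ t, p j) ≤ ∑ j, p j :=
            Finset.sum_le_sum_of_subset (Finset.filter_subset _ _)
          omega
        · have hb := hbusy s hs1 (heq ▸ hst)
          have hsplit := Finset.sum_filter_add_sum_filter_not Finset.univ
            (fun j => s ≤ r j ∧ r j ≤ t) p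
          have hco : (Finset.univ.filter fun j => ¬ (s ≤ r j ∧ r j ≤ t))
              = Finset.univ.filter fun j => r j < s := by
            apply Finset.filter_congr
            intro j _
            have h1 := hrT j
            have h2 : r j ≤ t := by omega
            constructor
            · intro h; simp at h ⊢; omega
            · intro h; simp at h ⊢; omega
          rw [hco] at hsplit
          omega
      have h1 : (∑ j ∈ Finset.univ.filter fun j => s ≤ r j ∧ r j ≤ t, (p j : ℤ))
          - ((t : ℤ) - (s : ℤ)) ≤ 0 := by
        have hles : s ≤ t := hst
        have hcast : (∑ j ∈ Finset.univ.filter fun j => s ≤ r j ∧ r j ≤ t, (p j : ℤ))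
            = ((∑ j ∈ Finset.univ.filter fun j => s ≤ r j ∧ r j ≤ t, p j : ℕ) : ℤ) := by
          push_cast
          rfl
        rw [hcast]
        omega
      refine le_trans h1 (Finset.sum_nonneg ?_)
      intro j _
      positivity
  · -- cost bound
    rw [IP1Cost, IP2Cost, Finset.mul_sum]
    refine Finset.sum_le_sum ?_
    intro j _
    rw [← Finset.mul_sum]
    have hmaprw : ((Seg T (r j)).map fun S => w j * ((S.2 - S.1 : ℕ) : ℚ) * (y j S : ℚ)).sum
        = w j * ((Seg T (r j)).map fun S => ((S.2 - S.1 : ℕ) : ℚ) * (y j S : ℚ)).sum := by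
      rw [← List.sum_map_mul_left]
      congr 1
      apply List.map_congr_left
      intro S _
      ring
    rw [hmaprw, ← mul_assoc, mul_comm (4:ℚ) (w j), mul_assoc]
    refine mul_le_mul_of_nonneg_left ?_ (hw j)
    -- reduce to a ℕ inequality
    have hkey : (∑ t ∈ Finset.Icc (r j) T, x j t)
        ≤ 4 * ((Seg T (r j)).map fun S => (S.2 - S.1) * y j S).sum := by
      set A : Finset ℕ := (Finset.Ico (r j) T).filter
        (fun t' => 1 ≤ y j (segOf T (r j) t')) with hAdef
      rcases A.eq_empty_or_nonempty with hA | hA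
      · have : ∀ t ∈ Finset.Icc (r j) T, x j t = 0 := by
          intro t ht
          rw [Finset.mem_Icc] at ht
          apply hxzero
          rintro ⟨t', h1, h2, h3⟩
          have : t' ∈ A := by
            rw [hAdef, Finset.mem_filter, Finset.mem_Ico]
            exact ⟨⟨le_trans ht.1 h1, h2⟩, h3⟩
          rw [hA] at this
          exact absurd this (Finset.notMem_empty t')
        rw [Finset.sum_eq_zero this]
        exact Nat.zero_le _
      · set tm := A.max' hA with htmdef
        have htmA : tm ∈ A := A.max'_mem hA
        rw [hAdef, Finset.mem_filter, Finset.mem_Ico] at htmA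
        obtain ⟨⟨hrtm, htmT⟩, hytm⟩ := htmA
        have hs := segOf_spec T (r j) tm hrtm htmT
        obtain ⟨hmem, ha, hb⟩ := hs
        obtain ⟨st, hlen, hbd⟩ := Seg_mem_structure T (r j) hmem
        have hyone : y j (segOf T (r j) tm) = 1 :=
          le_antisymm (hy1 j _ hmem) hytm
        -- step 1 : sum over Icc ≤ tm + 1 - r j
        have hstep1 : (∑ t ∈ Finset.Icc (r j) T, x j t) ≤ tm + 1 - r j := by
          have hb1 : (∑ t ∈ Finset.Icc (r j) T, x j t)
              ≤ ∑ t ∈ Finset.Icc (r j) T, (if t ≤ tm then 1 else 0) := by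
            refine Finset.sum_le_sum ?_
            intro t ht
            by_cases httm : t ≤ tm
            · rw [if_pos httm]; exact hx01 j t
            · rw [if_neg httm]
              rw [Finset.mem_Icc] at ht
              have : x j t = 0 := by
                apply hxzero
                rintro ⟨t', h1, h2, h3⟩
                have hmemA : t' ∈ A := by
                  rw [hAdef, Finset.mem_filter, Finset.mem_Ico]
                  exact ⟨⟨le_trans ht.1 h1, h2⟩, h3⟩
                have := A.le_max' t' hmemA
                omega
              rw [this]
          have hb2 : (∑ t ∈ Finset.Icc (r j) T, (if t ≤ tm then 1 else 0))
              = ∑ t ∈ (Finset.Icc (r j) T).filter (fun t => t ≤ tm), 1 :=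
            (Finset.sum_filter _ _).symm
          have hb3 : (Finset.Icc (r j) T).filter (fun t => t ≤ tm)
              = Finset.Icc (r j) tm := by
            ext a
            simp only [Finset.mem_filter, Finset.mem_Icc]
            omega
          have hb4 : (∑ _t ∈ Finset.Icc (r j) tm, 1) = tm + 1 - r j := by
            rw [Finset.sum_const, smul_eq_mul, mul_one, Nat.card_Icc]
          rw [hb2, hb3, hb4] at hb1
          exact hb1
        -- step 2 : tm + 1 - r j ≤ 4 * (length * y)
        have hstep2 : tm + 1 - r j
            ≤ 4 * (((segOf T (r j) tm).2 - (segOf T (r j) tm).1) * y j (segOf T (r j) tm)) := by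
          rw [hyone, mul_one]
          have h4 : (2:ℕ) ^ (st + 2) = 4 * 2 ^ st := by rw [pow_succ, pow_succ]; ring
          omega
        -- step 3 : this single segment term is at most the full sum
        have hstep3 : ((segOf T (r j) tm).2 - (segOf T (r j) tm).1) * y j (segOf T (r j) tm)
            ≤ ((Seg T (r j)).map fun S => (S.2 - S.1) * y j S).sum := by
          refine List.single_le_sum (fun a _ => Nat.zero_le a) _ ?_
          exact List.mem_map_of_mem hmem
        omega
    -- cast the ℕ inequality to ℚ
    have hcast1 : (∑ t ∈ Finset.Icc (r j) T, (x j t : ℚ))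
        = ((∑ t ∈ Finset.Icc (r j) T, x j t : ℕ) : ℚ) := by
      push_cast; rfl
    have hcast2 : ((Seg T (r j)).map fun S => ((S.2 - S.1 : ℕ) : ℚ) * (y j S : ℚ)).sum
        = ((((Seg T (r j)).map fun S => (S.2 - S.1) * y j S).sum : ℕ) : ℚ) := by
      rw [Nat.cast_list_sum, List.map_map]
      congr 1
      exact List.map_congr_left fun S _ => by simp only [Function.comp_apply]; push_cast; ring
    rw [hcast1, hcast2]
    exact_mod_cast hkey
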